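/- Let m, d, e, k be positive integers with e = gcd(m,d) = gcd(m,2d) and 2 ≤ k ≤ (m+e)/(2e). Let a_1, ..., a_{k-1} ∈ F_{2^m}, not all zero. Then the set of x in F_{2^m} satisfying the equation Σ_{j=1}^{k-1} (a_j^{2^{-jd}} x^{2^{-jd}} + a_j x^{2^{jd}}) = 0 (where exponentiation by 2^{-jd} means applying the inverse of the jd-th power of the Frobenius) is an F_{2^e}-subspace of F_{2^m} of dimension at most 2(k-1). -/

import Mathlib

open Finset

section KerBound
variable {F K : Type*} [Field F] [Field K] [Algebra F K] [FiniteDimensional F K]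

theorem ker_sigma_poly_le (σ : K ≃ₐ[F] K)
    (hfix : ∀ x : K, σ x = x → x ∈ Set.range (algebraMap F K)) :
    ∀ (t : ℕ) (c : ℕ → K), c t ≠ 0 →
      Module.finrank F (LinearMap.ker
        (∑ i ∈ Finset.range (t+1), c i • (σ^i : K ≃ₐ[F] K).toLinearMap)) ≤ t := by
  intro t
  induction t with
  | zero =>
    intro c hc
    have hker : LinearMap.ker (∑ i ∈ Finset.range 1, c i • (σ^i : K ≃ₐ[F] K).toLinearMap) = ⊥ := by
      rw [Finset.sum_range_one, LinearMap.ker_eq_bot']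
      intro x hx
      simp only [LinearMap.smul_apply, AlgEquiv.toLinearMap_apply, pow_zero,
        AlgEquiv.one_apply, smul_eq_mul] at hx
      exact (mul_eq_zero.mp hx).resolve_left hc
    rw [hker]; simp
  | succ t ih =>
    intro c hc
    set f : K →ₗ[F] K := ∑ i ∈ Finset.range (t+2), c i • (σ^i : K ≃ₐ[F] K).toLinearMap with hf
    by_cases hker : LinearMap.ker f = ⊥
    · rw [hker]; simp
    · obtain ⟨u, hu_mem, hu0⟩ := (Submodule.ne_bot_iff _).mp hker
      have hu : f u = 0 := hu_mem
      have hσn : ∀ n : ℕ, (σ^n) u ≠ 0 := by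
        intro n h0
        exact hu0 ((σ^n : K ≃ₐ[F] K).injective (by simpa using h0))
      set α : K := σ u * u⁻¹ with hα
      set S : ℕ → K := fun j => ∑ l ∈ Finset.Icc j (t+1), c l * (σ^l) u with hS
      set b : ℕ → K := fun j => ((σ^(j+1)) u)⁻¹ * S (j+1) with hb
      set g : K →ₗ[F] K := ∑ j ∈ Finset.range (t+1), b j • (σ^j : K ≃ₐ[F] K).toLinearMap with hg
      set h : K →ₗ[F] K := σ.toLinearMap - α • LinearMap.id with hh
      have happ : ∀ x, h x = σ x - α * x := by intro x; simp [hh]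
      have fapp : ∀ x, f x = ∑ i ∈ Finset.range (t+2), c i * (σ^i) x := by
        intro x; simp [hf, LinearMap.sum_apply]
      have gapp : ∀ y, g y = ∑ j ∈ Finset.range (t+1), b j * (σ^j) y := by
        intro y; simp [hg, LinearMap.sum_apply]
      -- S recurrence
      have hSrec : ∀ j, j ≤ t + 1 → S j = c j * (σ^j) u + S (j+1) := by
        intro j hj
        rw [hS]
        simp only
        rw [← Finset.Ioc_insert_left hj, Finset.sum_insert (by simp), Finset.Icc_add_one_left_eq_Ioc]
      have hS0 : S 0 = 0 := by
        have : S 0 = f u := by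
          rw [fapp, hS]
          simp only
          congr 1
          rw [← Finset.Ico_add_one_right_eq_Icc, Nat.Ico_zero_eq_range]
          rfl
        rw [this, hu]
      have hStop : S (t+1) = c (t+1) * (σ^(t+1)) u := by
        rw [hS]; simp
      have hbt : b t = c (t+1) := by
        rw [hb]; simp only
        rw [hStop, mul_comm (c (t+1)), ← mul_assoc, inv_mul_cancel₀ (hσn (t+1)), one_mul]
      -- σ^j α
      have hσα : ∀ j : ℕ, (σ^j) α = (σ^(j+1)) u * ((σ^j) u)⁻¹ := by
        intro j
        rw [hα, map_mul, map_inv₀]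
        congr 1
      have hcomp : f = g ∘ₗ h := by
        ext x
        simp only [LinearMap.comp_apply]
        rw [fapp, gapp]
        have hstep : ∀ j ∈ Finset.range (t+1),
            b j * (σ^j) (h x)
              = ((fun j => ((σ^j) u)⁻¹ * S j * (σ^j) x) (j+1)
                  - (fun j => ((σ^j) u)⁻¹ * S j * (σ^j) x) j)
                + c j * (σ^j) x := by
          intro j hj
          simp only
          have hσhx : (σ^j) (h x) = (σ^(j+1)) x - (σ^j) α * (σ^j) x := by
            rw [happ, map_sub, map_mul]
            congr 2
          rw [hσhx, hσα, hb]
          simp only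
          have hjle : j ≤ t + 1 := by
            have := Finset.mem_range.mp hj; omega
          rw [hSrec j hjle]
          field_simp [hσn j, hσn (j+1)]
          linear_combination (-(S (j+1)) * ((σ^j) u)⁻¹ * (σ^j) x) * mul_inv_cancel₀ (hσn (j+1)) + ((σ^j) x * c j) * mul_inv_cancel₀ (hσn j)
        rw [Finset.sum_congr rfl hstep, Finset.sum_add_distrib]
        beta_reduce
        rw [Finset.sum_range_sub (fun j => ((σ^j) u)⁻¹ * S j * (σ^j) x)]
        simp only [hS0, hStop, mul_zero, zero_mul, sub_zero]
        rw [Finset.sum_range_succ]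
        field_simp [hσn (t+1)]
        linear_combination (-(c (t+1) * (σ^(t+1)) x)) * mul_inv_cancel₀ (hσn (t+1))
      -- kernel of h
      have hkerh : LinearMap.ker h ≤ Submodule.span F {u} := by
        intro x hx
        have hx' : σ x = α * x := by
          have := happ x
          rw [LinearMap.mem_ker.mp hx] at this
          linear_combination -this
        have hσu : σ u ≠ 0 := fun h0 => hu0 (σ.injective (by simpa using h0))
        have hfixpt : σ (x * u⁻¹) = x * u⁻¹ := by
          rw [map_mul, map_inv₀, hx', hα]
          field_simp
        obtain ⟨r, hr⟩ := hfix _ hfixpt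
        have : x = r • u := by
          rw [Algebra.smul_def, hr]
          field_simp
        rw [this]
        exact Submodule.smul_mem _ _ (Submodule.mem_span_singleton_self u)
      have hkerh1 : Module.finrank F (LinearMap.ker h) ≤ 1 := by
        calc Module.finrank F (LinearMap.ker h)
            ≤ Module.finrank F (Submodule.span F {u}) := Submodule.finrank_mono hkerh
          _ = 1 := finrank_span_singleton hu0
      have hkerg : Module.finrank F (LinearMap.ker g) ≤ t := by
        apply ih b
        rw [hbt]; exact hc
      -- rank-nullity on h restricted to ker f
      set h' : (LinearMap.ker f) →ₗ[F] K := h.domRestrict (LinearMap.ker f) with hh'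
      have hrange : LinearMap.range h' ≤ LinearMap.ker g := by
        rintro _ ⟨⟨x, hxf⟩, rfl⟩
        have : g (h x) = 0 := by
          rw [← LinearMap.comp_apply, ← hcomp]
          exact hxf
        simpa [hh'] using this
      have hker' : Module.finrank F (LinearMap.ker h') ≤ Module.finrank F (LinearMap.ker h) := by
        rw [← Submodule.finrank_map_subtype_eq (LinearMap.ker f) (LinearMap.ker h')]
        apply Submodule.finrank_mono
        rintro _ ⟨⟨x, hxf⟩, hxk, rfl⟩
        simpa [hh'] using hxk
      have := LinearMap.finrank_range_add_finrank_ker h'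
      have hrk : Module.finrank F (LinearMap.range h') ≤ t := le_trans (Submodule.finrank_mono hrange) hkerg
      omega
end KerBound

theorem ker_sigma_poly_le' {F K : Type*} [Field F] [Field K] [Algebra F K]
    [FiniteDimensional F K] (σ : K ≃ₐ[F] K)
    (hfix : ∀ x : K, σ x = x → x ∈ Set.range (algebraMap F K)) :
    ∀ (t : ℕ) (c : ℕ → K), (∃ i ≤ t, c i ≠ 0) →
      Module.finrank F (LinearMap.ker
        (∑ i ∈ Finset.range (t+1), c i • (σ^i : K ≃ₐ[F] K).toLinearMap)) ≤ t := by
  intro t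
  induction t with
  | zero =>
    rintro c ⟨i, hi, hci⟩
    interval_cases i
    exact ker_sigma_poly_le σ hfix 0 c hci
  | succ t ih =>
    rintro c ⟨i, hi, hci⟩
    by_cases htop : c (t+1) ≠ 0
    · exact ker_sigma_poly_le σ hfix (t+1) c htop
    · push_neg at htop
      have hrw : ∑ i ∈ Finset.range (t+2), c i • (σ^i : K ≃ₐ[F] K).toLinearMap
          = ∑ i ∈ Finset.range (t+1), c i • (σ^i : K ≃ₐ[F] K).toLinearMap := by
        rw [Finset.sum_range_succ, htop, zero_smul, add_zero]
      rw [hrw]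
      have hi' : i ≤ t := by
        rcases Nat.lt_or_ge i (t+1) with h | h
        · omega
        · exfalso; exact hci (by rwa [show i = t + 1 by omega])
      exact le_trans (ih c ⟨i, hi', hci⟩) (Nat.le_succ t)

section Fix
variable {K : Type*} [Field K] [CharP K 2]

lemma frob_pow_inj {N : ℕ} {x y : K} (hxy : x ^ (2^N : ℕ) = y ^ (2^N : ℕ)) : x = y := by
  have h : (x - y) ^ (2^N : ℕ) = 0 := by
    rw [sub_pow_char_pow, hxy, sub_self]
  have := pow_eq_zero_iff (by positivity : (2^N : ℕ) ≠ 0) |>.mp h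
  exact sub_eq_zero.mp this

lemma fix_add {x : K} {a b : ℕ} (ha : x ^ (2^a : ℕ) = x) (hb : x ^ (2^b : ℕ) = x) :
    x ^ (2^(a+b) : ℕ) = x := by
  rw [pow_add, pow_mul, ha, hb]

lemma fix_mul {x : K} {a : ℕ} (s : ℕ) (ha : x ^ (2^a : ℕ) = x) : x ^ (2^(s*a) : ℕ) = x := by
  induction s with
  | zero => simp
  | succ s ih =>
    have : (s+1)*a = s*a + a := by ring
    rw [this]
    exact fix_add ih ha

lemma fix_sub {x : K} {a b : ℕ} (hba : b ≤ a) (ha : x ^ (2^a : ℕ) = x)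
    (hb : x ^ (2^b : ℕ) = x) : x ^ (2^(a-b) : ℕ) = x := by
  apply frob_pow_inj (N := b)
  rw [← pow_mul, ← pow_add]
  rw [Nat.sub_add_cancel hba, ha, hb]

lemma fix_mod {x : K} {a b : ℕ} (ha : x ^ (2^a : ℕ) = x) (hb : x ^ (2^b : ℕ) = x) :
    x ^ (2^(b % a) : ℕ) = x := by
  have h1 : x ^ (2^(a*(b/a)) : ℕ) = x := by
    rw [mul_comm]; exact fix_mul _ ha
  have h2 : b % a = b - a*(b/a) := by
    have := Nat.mod_add_div b a; omega
  rw [h2]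
  exact fix_sub (by have := Nat.mod_add_div b a; omega) hb h1

lemma fix_gcd (x : K) (a b : ℕ) : x ^ (2^a : ℕ) = x → x ^ (2^b : ℕ) = x →
    x ^ (2^(Nat.gcd a b) : ℕ) = x := by
  induction a, b using Nat.gcd.induction with
  | H0 n => intro _ hb; simpa using hb
  | H1 m n hm ih =>
    intro ha hb
    rw [Nat.gcd_rec]
    exact ih (fix_mod ha hb) ha

end Fix

lemma psi_pow {K : Type*} [Field K] [CharP K 2] [PerfectRing K 2]
    (n : ℕ) (y : K) : (((frobeniusEquiv K 2).symm)^[n] y) ^ (2^n : ℕ) = y := by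
  induction n generalizing y with
  | zero => simp
  | succ n ih =>
    rw [Function.iterate_succ_apply, pow_succ, pow_mul, ih, frobeniusEquiv_symm_pow_p]


/-- If `a_1, …, a_{k-1} ∈ F_{2^m}` are not all zero, the solution set of
`Σ_{j=1}^{k-1} (a_j^{2^{-jd}} x^{2^{-jd}} + a_j x^{2^{jd}}) = 0` is an
`F_{2^e}`-subspace of `F_{2^m}` of dimension at most `2(k-1)`. -/
theorem radical_dim_le (m d e k : ℕ) (hm : 0 < m) (hd : 0 < d) (he : 0 < e)
    (he1 : e = Nat.gcd m d) (he2 : e = Nat.gcd m (2 * d))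
    (hk1 : 2 ≤ k) (hk2 : k ≤ (m + e) / (2 * e))
    (F K : Type*) [Field F] [Field K] [Algebra F K] [Fintype F] [Fintype K]
    [CharP K 2]
    (hF : Fintype.card F = 2 ^ e) (hK : Fintype.card K = 2 ^ m)
    (a : ℕ → K) (ha : ∃ j ∈ Finset.Icc 1 (k - 1), a j ≠ 0) :
    ∃ W : Submodule F K,
      (W : Set K) =
        {x : K | ∑ j ∈ Finset.Icc 1 (k - 1),
          (((frobeniusEquiv K 2).symm)^[j * d] (a j) *
              ((frobeniusEquiv K 2).symm)^[j * d] x + a j * x ^ (2 ^ (j * d))) = 0} ∧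
      Module.finrank F W ≤ 2 * (k - 1) := by
  classical
  have hed : e ∣ d := he1 ▸ Nat.gcd_dvd_right m d
  -- the automorphism σ : x ↦ x^(2^d)
  have halg : ∀ r : F, (iterateFrobeniusEquiv K 2 d) (algebraMap F K r) = algebraMap F K r := by
    intro r
    rw [iterateFrobeniusEquiv_def]
    obtain ⟨s, hs⟩ := hed
    have h1 : (algebraMap F K r) ^ ((2:ℕ)^e) = algebraMap F K r := by
      rw [← map_pow, ← hF, FiniteField.pow_card]
    rw [hs, mul_comm]
    exact fix_mul s h1
  set σ : K ≃ₐ[F] K := AlgEquiv.ofRingEquiv halg with hσdef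
  have hσ : ∀ x : K, σ x = x ^ ((2:ℕ)^d) := fun x => rfl
  have hσpow : ∀ (i : ℕ) (x : K), (σ^i) x = x ^ ((2:ℕ)^(i*d)) := by
    intro i
    induction i with
    | zero => intro x; simp
    | succ i ih =>
      intro x
      rw [pow_succ, AlgEquiv.mul_apply, hσ x, ih, ← pow_mul, ← pow_add]
      congr 2
      ring
  -- fixed points of σ are in the image of F
  have hfix : ∀ x : K, σ x = x → x ∈ Set.range (algebraMap F K) := by
    intro x hx
    rw [hσ] at hx
    have hxm : x ^ ((2:ℕ)^m) = x := by rw [← hK]; exact FiniteField.pow_card x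
    have hxe : x ^ ((2:ℕ)^e) = x := by rw [he1]; exact fix_gcd x m d hxm hx
    set p : Polynomial K := Polynomial.X ^ ((2:ℕ)^e) - Polynomial.X with hp
    have hdeg : p.natDegree = 2^e := by
      rw [hp]
      rw [Polynomial.natDegree_sub_eq_left_of_natDegree_lt]
      · exact Polynomial.natDegree_X_pow _
      · rw [Polynomial.natDegree_X, Polynomial.natDegree_X_pow]
        exact Nat.one_lt_two_pow_iff.mpr (by omega)
    have hp0 : p ≠ 0 := by
      intro h0
      rw [h0, Polynomial.natDegree_zero] at hdeg
      have : 0 < 2^e := Nat.pow_pos (by omega)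
      omega
    set R : Finset K := Finset.univ.filter (fun z => z ^ ((2:ℕ)^e) = z) with hR
    set I : Finset K := Finset.univ.image (algebraMap F K) with hI
    have hIR : I ⊆ R := by
      intro z hz
      rw [hI, Finset.mem_image] at hz
      obtain ⟨r, _, rfl⟩ := hz
      rw [hR, Finset.mem_filter]
      exact ⟨Finset.mem_univ _, by rw [← map_pow, ← hF, FiniteField.pow_card]⟩
    have hcardI : I.card = 2^e := by
      rw [hI, Finset.card_image_of_injective _ (algebraMap F K).injective,
        Finset.card_univ, hF]
    have hcardR : R.card ≤ 2^e := by
      have hsub : R ⊆ p.roots.toFinset := by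
        intro z hz
        rw [hR, Finset.mem_filter] at hz
        rw [Multiset.mem_toFinset, Polynomial.mem_roots hp0]
        rw [hp]
        simp only [Polynomial.IsRoot, Polynomial.eval_sub, Polynomial.eval_pow,
          Polynomial.eval_X]
        rw [hz.2, sub_self]
      calc R.card ≤ p.roots.toFinset.card := Finset.card_le_card hsub
        _ ≤ Multiset.card p.roots := Multiset.toFinset_card_le _
        _ ≤ p.natDegree := Polynomial.card_roots' p
        _ = 2^e := hdeg
    have hRI : I = R := Finset.eq_of_subset_of_card_le hIR (hcardR.trans hcardI.ge)
    have hxR : x ∈ R := by rw [hR]; exact Finset.mem_filter.mpr ⟨Finset.mem_univ _, hxe⟩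
    rw [← hRI, hI, Finset.mem_image] at hxR
    obtain ⟨r, -, hr⟩ := hxR
    exact ⟨r, hr⟩
  -- the coefficients
  set N : ℕ := (k-1)*d with hN
  set c : ℕ → K := fun i =>
    if i < k-1 then (a (k-1-i)) ^ ((2:ℕ)^(i*d))
    else if i = k-1 then 0 else (a (i-(k-1))) ^ ((2:ℕ)^N) with hc
  refine ⟨LinearMap.ker (∑ i ∈ Finset.range (2*(k-1)+1), c i • (σ^i : K ≃ₐ[F] K).toLinearMap),
    ?_, ?_⟩
  · -- set equality
    ext x
    simp only [SetLike.mem_coe, LinearMap.mem_ker, Set.mem_setOf_eq]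
    have hfx : (∑ i ∈ Finset.range (2*(k-1)+1), c i • (σ^i : K ≃ₐ[F] K).toLinearMap) x
        = ∑ i ∈ Finset.range (2*(k-1)+1), c i * x ^ ((2:ℕ)^(i*d)) := by
      rw [LinearMap.sum_apply]
      refine Finset.sum_congr rfl fun i _ => ?_
      rw [LinearMap.smul_apply, AlgEquiv.toLinearMap_apply, hσpow, smul_eq_mul]
    have hkey : (∑ j ∈ Finset.Icc 1 (k-1),
          (((frobeniusEquiv K 2).symm)^[j * d] (a j) *
              ((frobeniusEquiv K 2).symm)^[j * d] x + a j * x ^ (2 ^ (j * d)))) ^ ((2:ℕ)^N)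
        = ∑ i ∈ Finset.range (2*(k-1)+1), c i * x ^ ((2:ℕ)^(i*d)) := by
      rw [sum_pow_char_pow]
      have hterm : ∀ j ∈ Finset.Icc 1 (k-1),
          (((frobeniusEquiv K 2).symm)^[j * d] (a j) *
              ((frobeniusEquiv K 2).symm)^[j * d] x + a j * x ^ (2 ^ (j * d))) ^ ((2:ℕ)^N)
            = (a j) ^ ((2:ℕ)^((k-1-j)*d)) * x ^ ((2:ℕ)^((k-1-j)*d))
              + (a j) ^ ((2:ℕ)^N) * x ^ ((2:ℕ)^(((k-1)+j)*d)) := by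
        intro j hj
        obtain ⟨hj1, hj2⟩ := Finset.mem_Icc.mp hj
        have hNsplit : N = j*d + (k-1-j)*d := by
          rw [hN, ← add_mul]
          congr 1
          omega
        rw [add_pow_char_pow]
        congr 1
        · have hcomp : ∀ y : K, (((frobeniusEquiv K 2).symm)^[j*d] y) ^ ((2:ℕ)^N)
              = y ^ ((2:ℕ)^((k-1-j)*d)) := by
            intro y
            rw [hNsplit, pow_add, pow_mul, psi_pow]
          rw [mul_pow, hcomp, hcomp]
        · have hexp : j*d + N = ((k-1)+j)*d := by rw [hN]; ring
          rw [mul_pow, ← pow_mul, ← pow_add, hexp]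
      rw [Finset.sum_congr rfl hterm, Finset.sum_add_distrib]
      have hsplit : ∑ i ∈ Finset.range (2*(k-1)+1), c i * x ^ ((2:ℕ)^(i*d))
          = (∑ i ∈ Finset.Ico 0 (k-1), c i * x ^ ((2:ℕ)^(i*d)))
            + (c (k-1) * x ^ ((2:ℕ)^((k-1)*d))
              + ∑ i ∈ Finset.Ico k (2*(k-1)+1), c i * x ^ ((2:ℕ)^(i*d))) := by
        rw [Finset.range_eq_Ico,
          ← Finset.sum_Ico_consecutive _ (Nat.zero_le (k-1)) (by omega : k-1 ≤ 2*(k-1)+1)]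
        congr 1
        rw [Finset.sum_eq_sum_Ico_succ_bot (by omega : k-1 < 2*(k-1)+1)]
        have hkk : k-1+1 = k := by omega
        rw [hkk]
      rw [hsplit]
      have hck : c (k-1) = 0 := by rw [hc]; simp
      rw [hck, zero_mul, zero_add]
      congr 1
      · -- first sum reindex
        refine Finset.sum_nbij' (fun j => k-1-j) (fun i => k-1-i) ?_ ?_ ?_ ?_ ?_
        · intro j hj
          obtain ⟨h1, h2⟩ := Finset.mem_Icc.mp hj
          rw [Finset.mem_Ico]; beta_reduce; omega
        · intro i hi
          obtain ⟨h1, h2⟩ := Finset.mem_Ico.mp hi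
          rw [Finset.mem_Icc]; beta_reduce; omega
        · intro j hj
          obtain ⟨h1, h2⟩ := Finset.mem_Icc.mp hj
          beta_reduce; omega
        · intro i hi
          obtain ⟨h1, h2⟩ := Finset.mem_Ico.mp hi
          beta_reduce; omega
        · intro j hj
          obtain ⟨h1, h2⟩ := Finset.mem_Icc.mp hj
          have hlt : k-1-j < k-1 := by omega
          rw [hc]
          beta_reduce
          simp only [if_pos hlt]
          have h5 : k-1-(k-1-j) = j := by omega
          rw [h5]
      · -- second sum reindex
        refine Finset.sum_nbij' (fun j => (k-1)+j) (fun i => i-(k-1)) ?_ ?_ ?_ ?_ ?_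
        · intro j hj
          obtain ⟨h1, h2⟩ := Finset.mem_Icc.mp hj
          rw [Finset.mem_Ico]; beta_reduce; omega
        · intro i hi
          obtain ⟨h1, h2⟩ := Finset.mem_Ico.mp hi
          rw [Finset.mem_Icc]; beta_reduce; omega
        · intro j hj
          obtain ⟨h1, h2⟩ := Finset.mem_Icc.mp hj
          beta_reduce; omega
        · intro i hi
          obtain ⟨h1, h2⟩ := Finset.mem_Ico.mp hi
          beta_reduce; omega
        · intro j hj
          obtain ⟨h1, h2⟩ := Finset.mem_Icc.mp hj
          have h3 : ¬ ((k-1)+j < k-1) := by omega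
          have h4 : ¬ ((k-1)+j = k-1) := by omega
          rw [hc]
          beta_reduce
          simp only [if_neg h3, if_neg h4]
          have h5 : (k-1)+j-(k-1) = j := by omega
          rw [h5]
    rw [hfx, ← hkey]
    rw [pow_eq_zero_iff (by positivity : ((2:ℕ)^N) ≠ 0)]
  · -- dimension bound
    obtain ⟨j, hj, haj⟩ := ha
    obtain ⟨hj1, hj2⟩ := Finset.mem_Icc.mp hj
    have := ker_sigma_poly_le' σ hfix (2*(k-1)) c ⟨(k-1)+j, by omega, by
      rw [hc]
      have h3 : ¬ ((k-1)+j < k-1) := by omega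
      have h4 : ¬ ((k-1)+j = k-1) := by omega
      simp only [if_neg h3, if_neg h4]
      have h5 : (k-1)+j-(k-1) = j := by omega
      rw [h5]
      exact pow_ne_zero _ haj⟩
    exact this
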